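/- Let a ∈ F_{q^2}^*, v ∈ F_q^*, b = v/a^2. The resultant with respect to x of N(x) = a^q x^3 + x^2 + b^q and D(x) = b x^3 + x + a equals, up to a nonzero factor, (a^{3q+3} + a^{q+1}v − v^2)^2 (a^{3q+3} − a^{2q+2} − 2a^{q+1}v − v^2). In particular, if a^{3q+3} + a^{q+1}v − v^2 = 0, then N and D have a common root in an algebraic closure. -/

import Mathlib

set_option maxRecDepth 8000

set_option maxHeartbeats 2000000 in
private theorem det6spec {F : Type*} [CommRing F] (a s u w : F) :
      Matrix.det !![s, 1, 0, w, 0, 0;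
                    0, s, 1, 0, w, 0;
                    0, 0, s, 1, 0, w;
                    u, 0, 1, a, 0, 0;
                    0, u, 0, 1, a, 0;
                    0, 0, u, 0, 1, a] =
      a^3*s^3 - a^2*s^2 - a^2*u - s^2*w - a*s*u*w - u*w
        + 3*a*s*u^2*w^2 - 3*a^2*s^2*u*w + 2*u^2*w^2 - u^3*w^3 := by
  simp [Matrix.det_succ_column_zero, Fin.sum_univ_succ, Matrix.submatrix_apply,
    Fin.succAbove,
    show ((2:Fin 3).castSucc) = (2:Fin 4) from rfl,
    show ((2:Fin 4).castSucc) = (2:Fin 5) from rfl,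
    show ((2:Fin 5).castSucc) = (2:Fin 6) from rfl]
  ring

private theorem keypoly {F : Type*} [CommRing F] (a s v X Y : F)
    (hX : a ^ 2 * X = v) (hY : s ^ 2 * Y = v) :
    s^6*a^6*(a^3*s^3 - a^2*s^2 - a^2*X - s^2*Y - a*s*X*Y - X*Y
      + 3*a*s*X^2*Y^2 - 3*a^2*s^2*X*Y + 2*X^2*Y^2 - X^3*Y^3)
    = (s^3*a^3 + s*a*v - v^2)^2 * (s^3*a^3 - s^2*a^2 - 2*(s*a)*v - v^2) := by
  linear_combination ((-1)*s^10*Y^5 + (2)*a^2*s^8*Y^3 + (-1)*a^2*s^8*X^1*Y^4 + (3)*a^3*s^9*Y^3 + (-1)*a^4*s^6*Y^1 + (2)*a^4*s^6*X^1*Y^2 + (-1)*a^4*s^6*X^2*Y^3 + (-1)*a^5*s^7*Y^1 + (3)*a^5*s^7*X^1*Y^2 + (-1)*a^6*s^6 + (-3)*a^6*s^8*Y^1) * hX + ((-1)*v^5 + (-1)*s^2*v^4*Y^1 + (-1)*s^4*v^3*Y^2 + (-1)*s^6*v^2*Y^3 + (-1)*s^8*v^1*Y^4 + (2)*a^2*s^2*v^3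 + (2)*a^2*s^4*v^2*Y^1 + (2)*a^2*s^6*v^1*Y^2 + (1)*a^2*s^8*X^1*Y^4 + (3)*a^3*s^3*v^3 + (3)*a^3*s^5*v^2*Y^1 + (3)*a^3*s^7*v^1*Y^2 + (-1)*a^4*s^4*v^1 + (-2)*a^4*s^6*X^1*Y^2 + (1)*a^4*s^6*X^2*Y^3 + (-1)*a^5*s^5*v^1 + (-3)*a^5*s^7*X^1*Y^2 + (-1)*a^6*s^6 + (-3)*a^6*s^6*v^1) * hY

/-- With `b = v/a^2`, `v ∈ F_q^*`, the resultant (Sylvester determinant) of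
`N(x) = a^q x^3 + x^2 + b^q` and `D(x) = b x^3 + x + a` equals, up to a nonzero
factor, `(a^{3q+3} + a^{q+1}v - v^2)^2 (a^{3q+3} - a^{2q+2} - 2a^{q+1}v - v^2)`;
in particular if `a^{3q+3} + a^{q+1}v - v^2 = 0` then `N` and `D` have a common
root in an algebraic closure. -/
theorem stmt_11 (p h q : ℕ) (hp : p.Prime) (hh : 1 ≤ h) (hq : q = p ^ h)
    (F : Type*) [Field F] [Fintype F] [CharP F p]
    (hcard : Fintype.card F = q ^ 2)
    (a v b : F) (ha : a ≠ 0) (hv : v ^ q = v) (hv0 : v ≠ 0)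
    (hb : b = v / a ^ 2)
    (i : F →+* AlgebraicClosure F) (hi : i = algebraMap F (AlgebraicClosure F)) :
    (∃ c : F, c ≠ 0 ∧
      Matrix.det !![a ^ q, 1, 0, b ^ q, 0, 0;
                    0, a ^ q, 1, 0, b ^ q, 0;
                    0, 0, a ^ q, 1, 0, b ^ q;
                    b, 0, 1, a, 0, 0;
                    0, b, 0, 1, a, 0;
                    0, 0, b, 0, 1, a] =
        c * ((a ^ (3 * q + 3) + a ^ (q + 1) * v - v ^ 2) ^ 2 *
          (a ^ (3 * q + 3) - a ^ (2 * q + 2) - 2 * a ^ (q + 1) * v - v ^ 2))) ∧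
    (a ^ (3 * q + 3) + a ^ (q + 1) * v - v ^ 2 = 0 →
      ∃ x : AlgebraicClosure F,
        i a ^ q * x ^ 3 + x ^ 2 + i b ^ q = 0 ∧ i b * x ^ 3 + x + i a = 0) := by
  have hs : (a : F) ^ q ≠ 0 := pow_ne_zero _ ha
  have hbq : b ^ q = v / (a ^ q) ^ 2 := by
    rw [hb, div_pow, hv, ← pow_mul, ← pow_mul, Nat.mul_comm]
  have e1 : a ^ (3 * q + 3) = (a ^ q) ^ 3 * a ^ 3 := by rw [pow_add, pow_mul']
  have e2 : a ^ (q + 1) = a ^ q * a := by rw [pow_add, pow_one]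
  have e3 : a ^ (2 * q + 2) = (a ^ q) ^ 2 * a ^ 2 := by rw [pow_add, pow_mul']
  constructor
  · refine ⟨((a ^ q) ^ 6 * a ^ 6)⁻¹,
      inv_ne_zero (mul_ne_zero (pow_ne_zero _ hs) (pow_ne_zero _ ha)), ?_⟩
    have hX : a ^ 2 * b = v := by rw [hb]; field_simp
    have hY : (a ^ q) ^ 2 * b ^ q = v := by rw [hbq]; field_simp
    rw [det6spec, e1, e2, e3,
      eq_inv_mul_iff_mul_eq₀ (mul_ne_zero (pow_ne_zero 6 hs) (pow_ne_zero 6 ha))]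
    linear_combination keypoly a (a ^ q) v b (b ^ q) hX hY
  · intro hcond
    set α := i a with hα
    set β := i v with hβ
    have hα0 : α ≠ 0 := by rw [hα, hi]; exact (map_ne_zero _).mpr ha
    have hβ0 : β ≠ 0 := by rw [hβ, hi]; exact (map_ne_zero _).mpr hv0
    have hσ0 : α ^ q ≠ 0 := pow_ne_zero _ hα0
    have hC' : (α ^ q) ^ 3 * α ^ 3 + α ^ q * α * β - β ^ 2 = 0 := by
      have h0 := congrArg i hcond
      rw [e1, e2] at h0
      simpa [map_add, map_sub, map_mul, map_pow, ← hα, ← hβ] using h0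
    obtain ⟨x, hx⟩ := IsAlgClosed.exists_root
      (p := Polynomial.C (β * α ^ q) * Polynomial.X ^ 2 +
        Polynomial.C (-((α ^ q) ^ 2 * α ^ 2)) * Polynomial.X + Polynomial.C (β * α))
      (by
        rw [Polynomial.degree_quadratic (mul_ne_zero hβ0 hσ0)]
        exact two_ne_zero)
    have hQ : β * α ^ q * x ^ 2 - (α ^ q) ^ 2 * α ^ 2 * x + β * α = 0 := by
      have h1 := hx
      simp only [Polynomial.IsRoot, Polynomial.eval_add, Polynomial.eval_mul,
        Polynomial.eval_pow, Polynomial.eval_C, Polynomial.eval_X] at h1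
      linear_combination h1
    -- D(x) = 0
    have hDp : β * x ^ 3 + α ^ 2 * x + α ^ 3 = 0 := by
      have hmul : β * α ^ q * (β * x ^ 3 + α ^ 2 * x + α ^ 3) = 0 := by
        linear_combination (β * x + α ^ q * α ^ 2) * hQ + α * x * hC'
      rcases mul_eq_zero.mp hmul with h' | h'
      · exact absurd h' (mul_ne_zero hβ0 hσ0)
      · exact h'
    -- N(x) = 0
    have hNp : (α ^ q) ^ 3 * x ^ 3 + (α ^ q) ^ 2 * x ^ 2 + β = 0 := by
      have hmul : β * ((α ^ q) ^ 3 * x ^ 3 + (α ^ q) ^ 2 * x ^ 2 + β) = 0 := by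
        linear_combination (α ^ q) ^ 3 * hDp + α ^ q * hQ - hC'
      rcases mul_eq_zero.mp hmul with h' | h'
      · exact absurd h' hβ0
      · exact h'
    refine ⟨x, ?_, ?_⟩
    · have hib : i b ^ q = β / (α ^ q) ^ 2 := by
        conv_lhs => rw [← map_pow, hbq]
        rw [hβ, hα, hi, map_div₀, map_pow, map_pow]
      rw [hib]
      field_simp
      linear_combination hNp
    · have hib : i b = β / α ^ 2 := by
        rw [hb, hβ, hα, hi, map_div₀, map_pow]
      rw [hib]
      field_simp
      linear_combination hDp
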